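/- arXiv:2304.02985 — 4 statements merged into one kernel-verified Lean document; each statement's English description precedes it below -/
import Mathlib

section
/- Let π be an interval partition of {1,…,2r} and let ρ = {(1,2),(3,4),…,(2r−1,2r)} be the standard pair matching. Then the join π ∨ ρ equals the one-block partition 1̂_{2r} if and only if for every i ∈ {1,…,r−1}, the elements 2i and 2i+1 lie in the same block of π. Consequently the set {π ∈ I(2r) : π ∨ ρ = 1̂_{2r}} is the interval [σ, 1̂_{2r}] in the lattice I(2r), where σ = {(1),(2,3),(4,5),…,(2r−2,2r−1),(2r)}, and this interval is lattice-isomorphic to I(r+1). -/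
/-- A setoid on a linearly ordered type is an *interval partition* if its classes are
intervals of consecutive elements. -/
def IsIntervalSetoid {n : ℕ} (π : Setoid (Fin n)) : Prop :=
  ∀ a b c : Fin n, a ≤ b → b ≤ c → π.r a c → π.r a b

namespace Stmt4Aux

variable {r : ℕ}

/-- The key iff. -/
lemma key (hr : 0 < r) (π : Setoid (Fin (2 * r))) (hπ : IsIntervalSetoid π) :
    π ⊔ Setoid.ker (fun x : Fin (2 * r) => x.val / 2) = ⊤ ↔
      Setoid.ker (fun x : Fin (2 * r) => (x.val + 1) / 2) ≤ π := by
  constructor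
  · intro htop
    rw [Setoid.le_def]
    suffices H : ∀ x y : Fin (2 * r), x.val ≤ y.val → (x.val + 1) / 2 = (y.val + 1) / 2 →
        π.r x y by
      intro x y hxy
      rw [Setoid.ker_def] at hxy
      rcases le_total x.val y.val with hle | hle
      · exact H x y hle hxy
      · exact π.symm (H y x hle hxy.symm)
    intro x y hle hxy
    rcases eq_or_lt_of_le hle with heq | hlt
    · exact (Fin.ext heq : x = y) ▸ π.refl x
    have hy : y.val = x.val + 1 ∧ x.val % 2 = 1 := by omega
    by_contra hnot
    set c : Setoid (Fin (2 * r)) := Setoid.ker (fun z : Fin (2 * r) => z.val ≤ x.val) with hc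
    have hπc : π ≤ c := by
      rw [Setoid.le_def]
      intro a b hab
      rw [hc, Setoid.ker_def, eq_iff_iff]
      constructor
      · intro ha
        by_contra hb
        push_neg at hb
        have h1 : π.r a x := hπ a x b (by rw [Fin.le_def]; exact ha) (by rw [Fin.le_def]; omega) hab
        have h2 : π.r a y := hπ a y b (by rw [Fin.le_def]; omega) (by rw [Fin.le_def]; omega) hab
        exact hnot (π.trans (π.symm h1) h2)
      · intro hb
        by_contra ha
        push_neg at ha
        have hab' := π.symm hab
        have h1 : π.r b x := hπ b x a (by rw [Fin.le_def]; exact hb) (by rw [Fin.le_def]; omega) hab'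
        have h2 : π.r b y := hπ b y a (by rw [Fin.le_def]; omega) (by rw [Fin.le_def]; omega) hab'
        exact hnot (π.trans (π.symm h1) h2)
    have hρc : Setoid.ker (fun x : Fin (2 * r) => x.val / 2) ≤ c := by
      rw [Setoid.le_def]
      intro a b hab
      rw [Setoid.ker_def] at hab
      rw [hc, Setoid.ker_def, eq_iff_iff]
      omega
    have : (⊤ : Setoid (Fin (2 * r))) ≤ c := htop ▸ sup_le hπc hρc
    have hcxy : c x y := this trivial
    rw [hc, Setoid.ker_def, eq_iff_iff] at hcxy
    omega
  · intro hσ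
    rw [Setoid.eq_top_iff]
    have hzero : ∀ k : Fin (2 * r),
        (π ⊔ Setoid.ker (fun x : Fin (2 * r) => x.val / 2)) ⟨0, by omega⟩ k := by
      intro k
      obtain ⟨k, hk⟩ := k
      induction k with
      | zero => exact Setoid.refl' _ _
      | succ m ih =>
        have hm : m < 2 * r := by omega
        refine Setoid.trans' _ (ih hm) ?_
        rcases Nat.even_or_odd m with he | ho
        · have : Setoid.ker (fun x : Fin (2 * r) => x.val / 2) ⟨m, hm⟩ ⟨m + 1, hk⟩ := by
            rw [Setoid.ker_def]
            obtain ⟨t, ht⟩ := he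
            show m / 2 = (m + 1) / 2
            omega
          exact le_sup_right (a := π) this
        · have : Setoid.ker (fun x : Fin (2 * r) => (x.val + 1) / 2) ⟨m, hm⟩ ⟨m + 1, hk⟩ := by
            rw [Setoid.ker_def]
            obtain ⟨t, ht⟩ := ho
            show (m + 1) / 2 = (m + 1 + 1) / 2
            omega
          exact le_sup_left (b := Setoid.ker (fun x : Fin (2 * r) => x.val / 2)) (hσ this)
    intro x y
    exact Setoid.trans' _ (Setoid.symm' _ (hzero x)) (hzero y)

/-- representative map Fin (r+1) → Fin (2r) -/
def fmap (hr : 0 < r) (i : Fin (r + 1)) : Fin (2 * r) :=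
  ⟨2 * i.val - 1, by have := i.isLt; omega⟩

/-- class map Fin (2r) → Fin (r+1) -/
def gmap (x : Fin (2 * r)) : Fin (r + 1) :=
  ⟨(x.val + 1) / 2, by have := x.isLt; omega⟩

lemma gmap_fmap (hr : 0 < r) (i : Fin (r + 1)) : gmap (fmap hr i) = i := by
  have := i.isLt
  simp only [gmap, fmap]
  ext
  show (2 * i.val - 1 + 1) / 2 = i.val
  omega

lemma fmap_mono (hr : 0 < r) : Monotone (fmap hr) := by
  intro i j hij
  rw [Fin.le_def] at hij ⊢
  simp only [fmap]
  omega

lemma gmap_mono : Monotone (gmap (r := r)) := by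
  intro i j hij
  rw [Fin.le_def] at hij ⊢
  simp only [gmap]
  omega

lemma sigma_rel_gmap (x : Fin (2 * r)) (hr : 0 < r) :
    Setoid.ker (fun x : Fin (2 * r) => (x.val + 1) / 2) x (fmap hr (gmap x)) := by
  rw [Setoid.ker_def]
  show (x.val + 1) / 2 = (2 * ((x.val + 1) / 2) - 1 + 1) / 2
  omega

end Stmt4Aux

open Stmt4Aux in
/-- For an interval partition `π` of `[2r]` and the standard pair matching
`ρ = {(1,2),(3,4),…}` (here `Setoid.ker (·/2)` in 0-indexing), `π ⊔ ρ = ⊤` iff `π`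
refines... more precisely iff `π` lies above `σ = {(1),(2,3),(4,5),…,(2r)}`
(here `Setoid.ker ((·+1)/2)`); consequently the set of such `π` is the interval
`[σ, ⊤]`, which is lattice isomorphic to the interval partitions of `[r+1]`. -/
theorem stmt4 {r : ℕ} (hr : 0 < r) :
    (∀ π : Setoid (Fin (2 * r)), IsIntervalSetoid π →
      (π ⊔ Setoid.ker (fun x : Fin (2 * r) => x.val / 2) = ⊤ ↔
        Setoid.ker (fun x : Fin (2 * r) => (x.val + 1) / 2) ≤ π)) ∧
    Nonempty
      ({π : Setoid (Fin (2 * r)) //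
          IsIntervalSetoid π ∧ π ⊔ Setoid.ker (fun x : Fin (2 * r) => x.val / 2) = ⊤} ≃o
        {τ : Setoid (Fin (r + 1)) // IsIntervalSetoid τ}) := by
  refine ⟨fun π hπ => key hr π hπ, ⟨?_⟩⟩
  -- forward map: comap fmap; backward: comap gmap
  refine
    { toFun := fun p => ⟨Setoid.comap (fmap hr) p.1, ?_⟩
      invFun := fun t => ⟨Setoid.comap gmap t.1, ?_, ?_⟩
      left_inv := ?_
      right_inv := ?_
      map_rel_iff' := ?_ }
  · -- interval
    intro a b c hab hbc h
    rw [Setoid.comap_rel] at h ⊢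
    exact p.2.1 _ _ _ (fmap_mono hr hab) (fmap_mono hr hbc) h
  · -- interval
    intro a b c hab hbc h
    rw [Setoid.comap_rel] at h ⊢
    exact t.2 _ _ _ (gmap_mono hab) (gmap_mono hbc) h
  · -- join = ⊤
    rw [key hr _ ?_]
    · intro x y h
      rw [Setoid.ker_def] at h
      rw [Setoid.comap_rel]
      have : gmap x = gmap y := by ext; exact h
      rw [this]
    · intro a b c hab hbc h
      rw [Setoid.comap_rel] at h ⊢
      exact t.2 _ _ _ (gmap_mono hab) (gmap_mono hbc) h
  · -- left_inv
    rintro ⟨π, hint, htop⟩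
    have hσ : Setoid.ker (fun x : Fin (2 * r) => (x.val + 1) / 2) ≤ π := (key hr π hint).1 htop
    ext1
    apply Setoid.ext
    intro a b
    rw [Setoid.comap_rel, Setoid.comap_rel]
    constructor
    · intro h
      exact π.trans (hσ (sigma_rel_gmap a hr))
        (π.trans h (π.symm (hσ (sigma_rel_gmap b hr))))
    · intro h
      exact π.trans (π.symm (hσ (sigma_rel_gmap a hr)))
        (π.trans h (hσ (sigma_rel_gmap b hr)))
  · -- right_inv
    rintro ⟨τ, hint⟩
    ext1
    apply Setoid.ext
    intro a b
    rw [Setoid.comap_rel, Setoid.comap_rel, gmap_fmap hr, gmap_fmap hr]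
  · -- map_rel_iff
    rintro ⟨π, hπ, hπtop⟩ ⟨π', hπ', hπ'top⟩
    show Setoid.comap (fmap hr) π ≤ Setoid.comap (fmap hr) π' ↔ π ≤ π'
    constructor
    · intro h x y hxy
      have hσ : Setoid.ker (fun x : Fin (2 * r) => (x.val + 1) / 2) ≤ π' := (key hr π' hπ').1 hπ'top
      have hσ1 : Setoid.ker (fun x : Fin (2 * r) => (x.val + 1) / 2) ≤ π := (key hr π hπ).1 hπtop
      have h1 : π (fmap hr (gmap x)) (fmap hr (gmap y)) :=
        π.trans (π.symm (hσ1 (sigma_rel_gmap x hr)))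
          (π.trans hxy (hσ1 (sigma_rel_gmap y hr)))
      have h2 : Setoid.comap (fmap hr) π (gmap x) (gmap y) := by
        rw [Setoid.comap_rel]; exact h1
      have h3 := h h2
      rw [Setoid.comap_rel] at h3
      exact π'.trans (hσ (sigma_rel_gmap x hr))
        (π'.trans h3 (π'.symm (hσ (sigma_rel_gmap y hr))))
    · intro h a b hab
      rw [Setoid.comap_rel] at hab ⊢
      exact h hab
end

section
/- The number of interval partitions π of {1,…,2r} such that π ∨ 1̂₂^r = 1̂_{2r} (where 1̂₂^r is the standard pair matching) equals 2^r, the number of interval partitions of {1,…,r+1}. -/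
namespace IntervalAux

variable {n : ℕ}

/-- The interval setoid on `Fin n` determined by a "link" function `f : ℕ → Bool`,
where `f k = true` means `k` and `k+1` are in the same block. -/
def mkS (n : ℕ) (f : ℕ → Bool) : Setoid (Fin n) where
  r a b := ∀ k, min a.val b.val ≤ k → k < max a.val b.val → f k = true
  iseqv := by
    refine ⟨?_, ?_, ?_⟩
    · intro a k h1 h2; omega
    · intro a b h k h1 h2; exact h k (by omega) (by omega)
    · intro a b c h1 h2 k hk1 hk2
      rcases (show (min a.val b.val ≤ k ∧ k < max a.val b.val) ∨
          (min b.val c.val ≤ k ∧ k < max b.val c.val) by omega) with ⟨u, v⟩ | ⟨u, v⟩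
      · exact h1 k u v
      · exact h2 k u v

lemma mkS_rel (f : ℕ → Bool) (a b : Fin n) :
    (mkS n f).r a b ↔ ∀ k, min a.val b.val ≤ k → k < max a.val b.val → f k = true :=
  Iff.rfl

lemma mkS_isInterval (f : ℕ → Bool) : IsIntervalSetoid (mkS n f) := by
  intro a b c hab hbc h k h1 h2
  rw [Fin.le_def] at hab hbc
  exact h k (by omega) (by omega)

lemma mkS_congr {f f' : ℕ → Bool} (h : ∀ k, k + 1 < n → f k = f' k) :
    mkS n f = mkS n f' := by
  apply Setoid.ext
  intro a b
  rw [mkS_rel, mkS_rel]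
  have ha := a.isLt; have hb := b.isLt
  constructor <;> intro hr k h1 h2
  · rw [← h k (by omega)]; exact hr k h1 h2
  · rw [h k (by omega)]; exact hr k h1 h2

lemma rel_link {π : Setoid (Fin n)} (hπ : IsIntervalSetoid π) {a b : Fin n}
    (h : π.r a b) {k : ℕ} (hk : k + 1 < n) (h1 : a.val ≤ k) (h2 : k < b.val) :
    π.r ⟨k, by omega⟩ ⟨k + 1, hk⟩ := by
  have hk1 : π.r a ⟨k + 1, hk⟩ :=
    hπ a ⟨k + 1, hk⟩ b (by rw [Fin.le_def]; simpa using by omega)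
      (by rw [Fin.le_def]; simpa using by omega) h
  have hk0 : π.r a ⟨k, by omega⟩ :=
    hπ a ⟨k, by omega⟩ ⟨k + 1, hk⟩ (by rw [Fin.le_def]; simpa using h1)
      (by rw [Fin.le_def]; simp) hk1
  exact π.trans (π.symm hk0) hk1

lemma rel_chain {π : Setoid (Fin n)} (a : Fin n) (m : ℕ) (hm : a.val + m < n)
    (h : ∀ k (h1 : a.val ≤ k) (h2 : k + 1 ≤ a.val + m), π.r ⟨k, by omega⟩ ⟨k + 1, by omega⟩) :
    π.r a ⟨a.val + m, hm⟩ := by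
  induction m with
  | zero =>
      have : (⟨a.val + 0, hm⟩ : Fin n) = a := Fin.ext rfl
      rw [this]
  | succ m ih =>
      exact π.trans (ih (by omega) (fun k h1 h2 => h k h1 (by omega)))
        (h (a.val + m) (by omega) (by omega))

lemma rel_of_links {π : Setoid (Fin n)} {a b : Fin n} (hab : a.val ≤ b.val)
    (h : ∀ k (h1 : a.val ≤ k) (h2 : k + 1 ≤ b.val), π.r ⟨k, by omega⟩ ⟨k + 1, by omega⟩) :
    π.r a b := by
  have hm : a.val + (b.val - a.val) < n := by have := b.isLt; omega
  have := rel_chain a (b.val - a.val) hm (fun k h1 h2 => h k h1 (by omega))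
  have hb : (⟨a.val + (b.val - a.val), hm⟩ : Fin n) = b := Fin.ext (by simp; omega)
  rwa [hb] at this

open Classical in
noncomputable def brkF (π : Setoid (Fin n)) : ℕ → Bool :=
  fun k => if h : k + 1 < n then (if π.r ⟨k, by omega⟩ ⟨k + 1, h⟩ then true else false)
    else true

lemma brkF_eq_true_iff (π : Setoid (Fin n)) {k : ℕ} (hk : k + 1 < n) :
    brkF π k = true ↔ π.r ⟨k, by omega⟩ ⟨k + 1, hk⟩ := by
  classical
  simp only [brkF, dif_pos hk]
  by_cases hp : π.r ⟨k, by omega⟩ ⟨k + 1, hk⟩ <;> simp [hp]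

lemma mkS_brkF {π : Setoid (Fin n)} (hπ : IsIntervalSetoid π) : mkS n (brkF π) = π := by
  apply Setoid.ext
  have key : ∀ a b : Fin n, a.val ≤ b.val → ((mkS n (brkF π)).r a b ↔ π.r a b) := by
    intro a b hab
    rw [mkS_rel]
    have hb := b.isLt
    constructor
    · intro h
      apply rel_of_links hab
      intro k h1 h2
      have := h k (by omega) (by omega)
      rwa [brkF_eq_true_iff π (by omega)] at this
    · intro h k h1 h2
      rw [brkF_eq_true_iff π (by omega)]
      exact rel_link hπ h (by omega) (by omega) (by omega)
  intro a b
  rcases le_total a.val b.val with hab | hab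
  · exact key a b hab
  · have := key b a hab
    exact ⟨fun h => π.symm (this.mp ((mkS n (brkF π)).symm h)),
      fun h => (mkS n (brkF π)).symm (this.mpr (π.symm h))⟩

lemma brkF_mkS (f : ℕ → Bool) {k : ℕ} (hk : k + 1 < n) : brkF (mkS n f) k = f k := by
  have h1 : (mkS n f).r ⟨k, by omega⟩ ⟨k + 1, hk⟩ ↔ f k = true := by
    rw [mkS_rel]
    constructor
    · intro h; exact h k (by simp) (by simp)
    · intro h j hj1 hj2
      simp only [Fin.val_mk] at hj1 hj2
      have : j = k := by omega
      rwa [this]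
  rw [← brkF_eq_true_iff (mkS n f) hk] at h1
  cases hf : f k <;> simp_all

/-! ### The join condition -/

lemma join_eq_top {r : ℕ} (hr : 0 < r) (π : Setoid (Fin (2 * r)))
    (h : ∀ k, k % 2 = 1 → ∀ hk : k + 1 < 2 * r, π.r ⟨k, by omega⟩ ⟨k + 1, hk⟩) :
    π ⊔ Setoid.ker (fun x : Fin (2 * r) => x.val / 2) = ⊤ := by
  refine le_antisymm le_top ?_
  rw [Setoid.le_def]
  intro a b _
  set σ := Setoid.ker (fun x : Fin (2 * r) => x.val / 2)
  have links : ∀ k (hk : k + 1 < 2 * r),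
      (π ⊔ σ).r ⟨k, by omega⟩ ⟨k + 1, hk⟩ := by
    intro k hk
    rcases Nat.even_or_odd k with he | ho
    · refine Setoid.le_def.mp le_sup_right ?_
      show (⟨k, by omega⟩ : Fin (2 * r)).val / 2 = (⟨k + 1, hk⟩ : Fin (2 * r)).val / 2
      obtain ⟨m, hm⟩ := he
      simp only [Fin.val_mk]
      omega
    · exact Setoid.le_def.mp le_sup_left (h k (Nat.odd_iff.mp ho) hk)
  -- relate a and b through consecutive links
  have main : ∀ a b : Fin (2 * r), a.val ≤ b.val → (π ⊔ σ).r a b := by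
    intro a b hab
    exact rel_of_links hab (fun k h1 h2 => links k (by have := b.isLt; omega))
  rcases le_total a.val b.val with hab | hab
  · exact main a b hab
  · exact (π ⊔ σ).symm (main b a hab)

lemma rel_of_join_eq_top {r : ℕ} {π : Setoid (Fin (2 * r))} (hπ : IsIntervalSetoid π)
    (htop : π ⊔ Setoid.ker (fun x : Fin (2 * r) => x.val / 2) = ⊤)
    {k : ℕ} (hodd : k % 2 = 1) (hk : k + 1 < 2 * r) :
    π.r ⟨k, by omega⟩ ⟨k + 1, hk⟩ := by
  by_contra hne
  set τ := Setoid.ker (fun x : Fin (2 * r) => decide (x.val ≤ k)) with hτ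
  have hπτ : π ≤ τ := by
    rw [Setoid.le_def]
    intro a b hab
    show decide (a.val ≤ k) = decide (b.val ≤ k)
    rcases (show (a.val ≤ k ∧ k < b.val) ∨ (b.val ≤ k ∧ k < a.val) ∨
        ((a.val ≤ k) ↔ (b.val ≤ k)) by omega) with ⟨h1, h2⟩ | ⟨h1, h2⟩ | h1
    · exact absurd (rel_link hπ hab hk h1 h2) hne
    · exact absurd (rel_link hπ (π.symm hab) hk h1 h2) hne
    · simp [decide_eq_decide, h1]
  have hστ : Setoid.ker (fun x : Fin (2 * r) => x.val / 2) ≤ τ := by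
    rw [Setoid.le_def]
    intro a b hab
    show decide (a.val ≤ k) = decide (b.val ≤ k)
    have hab' : a.val / 2 = b.val / 2 := hab
    rw [decide_eq_decide]
    omega
  have h1 : (⊤ : Setoid (Fin (2 * r))) ≤ τ := htop ▸ sup_le hπτ hστ
  have h2 : τ.r ⟨0, by omega⟩ ⟨k + 1, hk⟩ := Setoid.le_def.mp h1 trivial
  have h3 : decide ((0 : ℕ) ≤ k) = decide (k + 1 ≤ k) := h2
  simp at h3

/-! ### Counting via bijections with boolean vectors -/

/-- Link function encoding for the joined case. -/
def F1 (r : ℕ) (g : Fin r → Bool) : ℕ → Bool :=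
  fun k => if h : k % 2 = 0 ∧ k / 2 < r then g ⟨k / 2, h.2⟩ else true

/-- Link function encoding for the plain case. -/
def F2 (r : ℕ) (g : Fin r → Bool) : ℕ → Bool :=
  fun k => if h : k < r then g ⟨k, h⟩ else true

noncomputable def equiv1 (r : ℕ) (hr : 0 < r) :
    {π : Setoid (Fin (2 * r)) //
        IsIntervalSetoid π ∧
          π ⊔ Setoid.ker (fun x : Fin (2 * r) => x.val / 2) = ⊤} ≃ (Fin r → Bool) where
  toFun π := fun i => brkF π.1 (2 * i.val)
  invFun g := ⟨mkS (2 * r) (F1 r g), mkS_isInterval _, by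
    apply join_eq_top hr
    intro k hodd hk
    rw [← brkF_eq_true_iff _ hk, brkF_mkS _ hk]
    have hne : ¬(k % 2 = 0 ∧ k / 2 < r) := by omega
    simp [F1, dif_neg hne]⟩
  left_inv := by
    rintro ⟨π, hπ, htop⟩
    ext : 1
    show mkS (2 * r) (F1 r fun i => brkF π (2 * i.val)) = π
    have h1 : mkS (2 * r) (F1 r fun i => brkF π (2 * i.val)) = mkS (2 * r) (brkF π) := by
      apply mkS_congr
      intro k hk
      rcases Nat.even_or_odd k with he | ho
      · obtain ⟨m, hm⟩ := he
        have hm2 : k % 2 = 0 ∧ k / 2 < r := by omega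
        have h3 : F1 r (fun i => brkF π (2 * i.val)) k = brkF π (2 * (k / 2)) := by
          simp [F1, dif_pos hm2]
        rw [h3]
        congr 1
        omega
      · have hodd : k % 2 = 1 := Nat.odd_iff.mp ho
        have hne : ¬(k % 2 = 0 ∧ k / 2 < r) := by omega
        have h3 : F1 r (fun i => brkF π (2 * i.val)) k = true := by
          simp [F1, dif_neg hne]
        rw [h3, eq_comm, brkF_eq_true_iff π hk]
        exact rel_of_join_eq_top hπ htop hodd hk
    rw [h1, mkS_brkF hπ]
  right_inv := by
    intro g
    funext i
    have hk : 2 * i.val + 1 < 2 * r := by have := i.isLt; omega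
    show brkF (mkS (2 * r) (F1 r g)) (2 * i.val) = g i
    rw [brkF_mkS _ hk]
    have h2 : (2 * i.val) % 2 = 0 ∧ (2 * i.val) / 2 < r := by have := i.isLt; omega
    simp only [F1, dif_pos h2]
    exact congrArg g (Fin.ext (by simp))

noncomputable def equiv2 (r : ℕ) :
    {τ : Setoid (Fin (r + 1)) // IsIntervalSetoid τ} ≃ (Fin r → Bool) where
  toFun τ := fun i => brkF τ.1 i.val
  invFun g := ⟨mkS (r + 1) (F2 r g), mkS_isInterval _⟩
  left_inv := by
    rintro ⟨τ, hτ⟩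
    ext : 1
    show mkS (r + 1) (F2 r fun i => brkF τ i.val) = τ
    have h1 : mkS (r + 1) (F2 r fun i => brkF τ i.val) = mkS (r + 1) (brkF τ) := by
      apply mkS_congr
      intro k hk
      have hkr : k < r := by omega
      simp [F2, dif_pos hkr]
    rw [h1, mkS_brkF hτ]
  right_inv := by
    intro g
    funext i
    have hk : i.val + 1 < r + 1 := by have := i.isLt; omega
    show brkF (mkS (r + 1) (F2 r g)) i.val = g i
    rw [brkF_mkS _ hk]
    have h2 : i.val < r := i.isLt
    simp [F2, dif_pos h2]

end IntervalAux

/-- The number of interval partitions `π` of `[2r]` with `π ⊔ 1̂₂ʳ = 1̂₂ᵣ`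
(where `1̂₂ʳ` is the standard pair matching, `Setoid.ker (·/2)` in 0-indexing)
is `2ʳ`, which is also the number of interval partitions of `[r+1]`. -/
theorem stmt5 (r : ℕ) (hr : 0 < r) :
    {π : Setoid (Fin (2 * r)) |
        IsIntervalSetoid π ∧
          π ⊔ Setoid.ker (fun x : Fin (2 * r) => x.val / 2) = ⊤}.ncard = 2 ^ r ∧
    {τ : Setoid (Fin (r + 1)) | IsIntervalSetoid τ}.ncard = 2 ^ r := by
  have hcard : Nat.card (Fin r → Bool) = 2 ^ r := by
    simp [Nat.card_eq_fintype_card]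
  constructor
  · rw [← Nat.card_coe_set_eq]
    exact (Nat.card_congr (IntervalAux.equiv1 r hr)).trans hcard
  · rw [← Nat.card_coe_set_eq]
    exact (Nat.card_congr (IntervalAux.equiv2 r)).trans hcard
end

section
/- Let F(z) be a formal power series with F(0)=1, a ∈ ℝ, and define G(z) = F(z)/(1 − a z F(z)). If F is the moment generating function of a matrix B with respect to a state given by a rank-one projection P (i.e., F(z) = Σ_m Tr(P B^m) z^m with the factorization property Tr(P B^{l_1} P ⋯ P B^{l_r}) = Π Tr(P B^{l_i})), then the moment generating function of aP + B with respect to the same state is G, i.e., Σ_m Tr(P (aP + B)^m) z^m = F(z)/(1 − a z F(z)). -/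
open Matrix PowerSeries

/-- If `P` is a rank-one projection (`Tr P = 1`, `P M P = Tr(PM)·P`) and
`F(z) = Σ Tr(P Bᵐ) zᵐ` is the moment generating function of `B` in the state
`Tr(P ·)`, then the moment generating function `G` of `aP + B` satisfies
`G(z)(1 − a z F(z)) = F(z)`, i.e. `G = F/(1 − a z F)`. -/
theorem stmt10 {n : ℕ} (P B : Matrix (Fin n) (Fin n) ℂ) (a : ℝ)
    (hProj : P * P = P) (hTrP : Matrix.trace P = 1)
    (hRank1 : ∀ M : Matrix (Fin n) (Fin n) ℂ, P * M * P = Matrix.trace (P * M) • P) :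
    (PowerSeries.mk fun m => Matrix.trace (P * ((a : ℂ) • P + B) ^ m)) *
        (1 - PowerSeries.C (a : ℂ) * PowerSeries.X *
          PowerSeries.mk fun m => Matrix.trace (P * B ^ m)) =
      PowerSeries.mk fun m => Matrix.trace (P * B ^ m) := by
  set f : ℕ → ℂ := fun m => Matrix.trace (P * B ^ m) with hf
  set g : ℕ → ℂ := fun m => Matrix.trace (P * ((a : ℂ) • P + B) ^ m) with hg
  have key : ∀ m, P * ((a : ℂ) • P + B) ^ m =
      P * B ^ m + (a : ℂ) • ∑ j ∈ Finset.range m, g j • (P * B ^ (m - 1 - j)) := by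
    intro m
    induction m with
    | zero => simp
    | succ m ih =>
      have hgm : g m = f m + (a : ℂ) * ∑ j ∈ Finset.range m, g j * f (m - 1 - j) := by
        have h := congrArg Matrix.trace ih
        simpa [hf, hg, Matrix.trace_add, Matrix.trace_smul, Finset.mul_sum,
          Matrix.trace_sum, smul_eq_mul] using h
      have h1 : P * B ^ m * ((a : ℂ) • P + B) = (a : ℂ) • (f m • P) + P * B ^ (m + 1) := by
        rw [mul_add, mul_smul_comm, hRank1 (B ^ m), pow_succ, ← mul_assoc, hf]
      have h2 : ∀ j ∈ Finset.range m,
          (g j • (P * B ^ (m - 1 - j))) * ((a : ℂ) • P + B)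
            = (a : ℂ) • ((g j * f (m - 1 - j)) • P) + g j • (P * B ^ (m - j)) := by
        intro j hj
        simp only [Finset.mem_range] at hj
        have he : m - 1 - j + 1 = m - j := by omega
        rw [smul_mul_assoc, mul_add, mul_smul_comm, hRank1 (B ^ (m - 1 - j)),
          mul_assoc, ← pow_succ, he, hf]
        rw [smul_add, smul_smul]
        module
      rw [pow_succ, ← mul_assoc, ih, add_mul, smul_mul_assoc, Finset.sum_mul,
        Finset.sum_congr rfl h2, h1, Finset.sum_add_distrib, Finset.sum_range_succ]
      have hsum : ∑ j ∈ Finset.range m, (a : ℂ) • ((g j * f (m - 1 - j)) • P)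
          = ((a : ℂ) * ∑ j ∈ Finset.range m, g j * f (m - 1 - j)) • P := by
        have hc : ∀ j ∈ Finset.range m, (a : ℂ) • ((g j * f (m - 1 - j)) • P)
            = ((a : ℂ) * (g j * f (m - 1 - j))) • P := fun j _ => smul_smul _ _ _
        rw [Finset.sum_congr rfl hc, ← Finset.sum_smul, Finset.mul_sum]
      have hgmP : g m • (P * B ^ (m + 1 - 1 - m)) =
          f m • P + ((a : ℂ) * ∑ j ∈ Finset.range m, g j * f (m - 1 - j)) • P := by
        have : m + 1 - 1 - m = 0 := by omega
        rw [this, pow_zero, mul_one, hgm, add_smul]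
      rw [hsum, hgmP]
      have hexp : ∀ j ∈ Finset.range m,
          g j • (P * B ^ (m - j)) = g j • (P * B ^ (m + 1 - 1 - j)) := by
        intro j hj; simp only [Finset.mem_range] at hj
        congr 2
      rw [Finset.sum_congr rfl hexp]
      module
  have hrec : ∀ m, g m = f m + (a : ℂ) * ∑ j ∈ Finset.range m, g j * f (m - 1 - j) := by
    intro m
    have h := congrArg Matrix.trace (key m)
    simpa [hf, hg, Matrix.trace_add, Matrix.trace_smul, Finset.mul_sum,
      Matrix.trace_sum, smul_eq_mul] using h
  ext m
  rw [mul_one_sub, map_sub, PowerSeries.coeff_mk]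
  cases m with
  | zero =>
    simp [hrec 0, hf]
  | succ m =>
    have h1 : (PowerSeries.mk g) * (PowerSeries.C (a : ℂ) * PowerSeries.X *
        PowerSeries.mk f) = PowerSeries.C (a : ℂ) * (PowerSeries.X *
        (PowerSeries.mk g * PowerSeries.mk f)) := by ring
    rw [h1, PowerSeries.coeff_C_mul, PowerSeries.coeff_succ_X_mul, PowerSeries.coeff_mul,
      PowerSeries.coeff_mk, hrec (m + 1)]
    have h2 : ∑ p ∈ Finset.HasAntidiagonal.antidiagonal m,
        (PowerSeries.coeff p.1) (PowerSeries.mk g) * (PowerSeries.coeff p.2) (PowerSeries.mk f)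
        = ∑ j ∈ Finset.range (m + 1), g j * f (m - j) := by
      rw [Finset.Nat.sum_antidiagonal_eq_sum_range_succ_mk]
      simp
    rw [h2]
    have h3 : ∀ j ∈ Finset.range (m + 1), g j * f (m + 1 - 1 - j) = g j * f (m - j) := by
      intro j hj; simp only [Finset.mem_range] at hj; congr 2
    rw [Finset.sum_congr rfl h3]
    ring
end

section
/- Let x ∈ ℝ, x ≠ 0, satisfy 2/x = tan(1/x). Then the limit as ε → 0⁺ of iε·G(x+iε), where G(z) = 1/(2z − z²tan(1/z)), equals x²/(4 − x²). Moreover for x = 0 the corresponding limit equals 1/2. -/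
open Filter

/-- Atoms of the Boolean tangent law: with `G(z) = 1/(2z − z² tan(1/z))`, for every real
root `x ≠ 0` of `2/x = tan(1/x)` one has `lim_{ε→0⁺} iε G(x+iε) = x²/(4−x²)`, and at
`x = 0` the corresponding limit is `1/2`. -/
theorem stmt16 :
    (∀ x : ℝ, x ≠ 0 → Real.tan (1 / x) = 2 / x →
      Tendsto
        (fun ε : ℝ =>
          Complex.I * (ε : ℂ) *
            (2 * ((x : ℂ) + Complex.I * ε) -
                ((x : ℂ) + Complex.I * ε) ^ 2 *
                  Complex.tan (1 / ((x : ℂ) + Complex.I * ε)))⁻¹)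
        (nhdsWithin 0 (Set.Ioi 0))
        (nhds ((x ^ 2 / (4 - x ^ 2) : ℝ) : ℂ))) ∧
    Tendsto
      (fun ε : ℝ =>
        Complex.I * (ε : ℂ) *
          (2 * (Complex.I * ε) -
              (Complex.I * ε) ^ 2 * Complex.tan (1 / (Complex.I * ε)))⁻¹)
      (nhdsWithin 0 (Set.Ioi 0)) (nhds (1 / 2)) := by
  constructor
  · intro x hx ht
    -- basic facts
    have hc : Real.cos (1/x) ≠ 0 := by
      intro h
      have : Real.tan (1/x) = 0 := by rw [Real.tan_eq_sin_div_cos, h, div_zero]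
      rw [ht] at this
      exact hx (by field_simp at this; norm_num at this)
    have hx4 : x ^ 2 ≠ 4 := by
      have key : Real.tan (1/2) ≠ 1 := by
        have h2 : (1:ℝ)/2 < Real.pi / 4 := by
          have := Real.pi_gt_three; linarith
        have h3 : Real.tan (1/2) < Real.tan (Real.pi/4) :=
          Real.tan_lt_tan_of_nonneg_of_lt_pi_div_two (by norm_num)
            (by linarith [Real.pi_pos]) h2
        rw [Real.tan_pi_div_four] at h3
        exact ne_of_lt h3
      intro h
      have hx2 : x = 2 ∨ x = -2 := by
        have : (x - 2) * (x + 2) = 0 := by ring_nf; nlinarith [h]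
        rcases mul_eq_zero.1 this with h' | h'
        · left; linarith
        · right; linarith
      rcases hx2 with rfl | rfl
      · rw [show (2:ℝ)/2 = 1 by norm_num] at ht
        exact key ht
      · apply key
        have : Real.tan (1/(-2:ℝ)) = 2/(-2:ℝ) := ht
        rw [show (1:ℝ)/(-2:ℝ) = -(1/2) by norm_num, Real.tan_neg] at this
        rw [show (2:ℝ)/(-2:ℝ) = -1 by norm_num] at this
        linarith [this]
    have hsec : (1:ℝ) / Real.cos (1/x) ^ 2 = 1 + 4 / x^2 := by
      have h := Real.sin_sq_add_cos_sq (1/x)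
      have hs : Real.sin (1/x) = (2/x) * Real.cos (1/x) := by
        rw [Real.tan_eq_sin_div_cos] at ht
        field_simp at ht ⊢
        linarith [ht]
      rw [hs] at h
      field_simp at h ⊢
      nlinarith [h]
    have hxC : (x:ℂ) ≠ 0 := Complex.ofReal_ne_zero.2 hx
    have hcC : Complex.cos (1/(x:ℂ)) ≠ 0 := by
      rw [show (1:ℂ)/(x:ℂ) = ((1/x : ℝ):ℂ) by push_cast; ring, ← Complex.ofReal_cos]
      exact Complex.ofReal_ne_zero.2 hc
    -- derivative of D at x
    set D : ℂ → ℂ := fun z => 2*z - z^2 * Complex.tan (1/z) with hD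
    have htanC : Complex.tan (1/(x:ℂ)) = ((2/x : ℝ):ℂ) := by
      rw [show (1:ℂ)/(x:ℂ) = ((1/x : ℝ):ℂ) by push_cast; ring, ← Complex.ofReal_tan, ht]
    have h1 : HasDerivAt (fun z : ℂ => 1/z) (-(((x:ℂ))^2)⁻¹) (x:ℂ) := by
      simpa [one_div] using hasDerivAt_inv hxC
    have h2 : HasDerivAt Complex.tan (1 / Complex.cos (1/(x:ℂ)) ^ 2) (1/(x:ℂ)) :=
      Complex.hasDerivAt_tan hcC
    have h3 : HasDerivAt (fun z : ℂ => Complex.tan (1/z))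
        (1 / Complex.cos (1/(x:ℂ)) ^ 2 * (-(((x:ℂ))^2)⁻¹)) (x:ℂ) := h2.comp _ h1
    have h4 : HasDerivAt (fun z : ℂ => z^2) (2*(x:ℂ)) (x:ℂ) := by
      simpa using hasDerivAt_pow 2 (x:ℂ)
    have h5 := h4.mul h3
    have h6 : HasDerivAt (fun z : ℂ => 2*z) 2 (x:ℂ) := by
      simpa using (hasDerivAt_id (x:ℂ)).const_mul (2:ℂ)
    have hDd : HasDerivAt D ((( (4 - x^2)/x^2 : ℝ)) : ℂ) (x:ℂ) := by
      have := h6.sub h5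
      convert this using 1
      case e'_4 => rfl
      case e'_5 => rfl
      case e'_8 => rfl
      rw [htanC]
      have hcos : Complex.cos (1/(x:ℂ)) = ((Real.cos (1/x) : ℝ):ℂ) := by
        rw [show (1:ℂ)/(x:ℂ) = ((1/x : ℝ):ℂ) by push_cast; ring, ← Complex.ofReal_cos]
      rw [hcos]
      have hsecC : (1:ℂ) / ((Real.cos (1/x) : ℝ):ℂ) ^ 2 = 1 + 4 / (x:ℂ)^2 := by
        have := congrArg (fun r : ℝ => (r : ℂ)) hsec
        push_cast at this
        convert this using 2 <;> push_cast <;> ring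
      rw [hsecC]
      push_cast
      field_simp
      ring
    -- D x = 0
    have hDx0 : D (x:ℂ) = 0 := by
      rw [hD]
      simp only
      rw [htanC]
      push_cast
      field_simp
      ring
    -- map ε ↦ x + iε into punctured nhds
    have hmap : Tendsto (fun ε : ℝ => (x:ℂ) + Complex.I * ε)
        (nhdsWithin 0 (Set.Ioi 0)) (nhdsWithin (x:ℂ) {(x:ℂ)}ᶜ) := by
      rw [tendsto_nhdsWithin_iff]
      constructor
      · have hcont : Continuous fun ε : ℝ => (x:ℂ) + Complex.I * ε := by continuity
        have := (hcont.tendsto 0).mono_left (nhdsWithin_le_nhds (s := Set.Ioi 0))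
        simpa using this
      · filter_upwards [self_mem_nhdsWithin] with ε (hε : ε ∈ Set.Ioi 0)
        simp only [Set.mem_compl_iff, Set.mem_singleton_iff]
        intro h
        have : Complex.I * ε = 0 := by linear_combination h
        exact mul_ne_zero Complex.I_ne_zero
          (Complex.ofReal_ne_zero.2 (ne_of_gt hε)) this
    have hslope := (hasDerivAt_iff_tendsto_slope.mp hDd).comp hmap
    have hne : (((4 - x^2)/x^2 : ℝ) : ℂ) ≠ 0 := by
      rw [Complex.ofReal_ne_zero]
      exact div_ne_zero (by intro h; apply hx4; linarith) (pow_ne_zero 2 hx)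
    have hinv := hslope.inv₀ hne
    have hval : ((((4 - x^2)/x^2 : ℝ)) : ℂ)⁻¹ = ((x ^ 2 / (4 - x ^ 2) : ℝ) : ℂ) := by
      rw [← Complex.ofReal_inv, inv_div]
    rw [hval] at hinv
    refine Tendsto.congr' ?_ hinv
    filter_upwards [self_mem_nhdsWithin] with ε (hε : ε ∈ Set.Ioi 0)
    have hIε : Complex.I * (ε:ℂ) ≠ 0 :=
      mul_ne_zero Complex.I_ne_zero (Complex.ofReal_ne_zero.2 (ne_of_gt hε))
    simp only [Function.comp_apply]
    rw [slope_def_field, hDx0, sub_zero, add_sub_cancel_left, inv_div, hD]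
    simp only
    rw [div_eq_mul_inv, mul_comm]
  ·
    have habs : ∀ t : ℝ, |Real.tanh t| ≤ 1 := by
      intro t
      rw [Real.tanh_eq_sinh_div_cosh, abs_div, abs_of_pos (Real.cosh_pos t),
        div_le_one (Real.cosh_pos t), abs_le]
      constructor
      · have := Real.sinh_lt_cosh (-t)
        rw [Real.sinh_neg, Real.cosh_neg] at this
        linarith
      · exact (Real.sinh_lt_cosh t).le
    -- the real denominator tends to 2
    have h0 : Tendsto (fun ε : ℝ => ε * Real.tanh (1/ε)) (nhdsWithin 0 (Set.Ioi 0)) (nhds 0) := by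
      apply squeeze_zero_norm' (a := fun ε : ℝ => ε) ?_ (tendsto_id.mono_left nhdsWithin_le_nhds)
      filter_upwards [self_mem_nhdsWithin] with ε (hε : ε ∈ Set.Ioi 0)
      rw [Real.norm_eq_abs, abs_mul, abs_of_pos hε]
      calc ε * |Real.tanh (1/ε)| ≤ ε * 1 :=
            mul_le_mul_of_nonneg_left (habs _) hε.le
        _ = ε := mul_one ε
    have h1 : Tendsto (fun ε : ℝ => (((2 - ε * Real.tanh (1/ε) : ℝ)) : ℂ)⁻¹)
        (nhdsWithin 0 (Set.Ioi 0)) (nhds (1/2)) := by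
      have h2 : Tendsto (fun ε : ℝ => (2 - ε * Real.tanh (1/ε) : ℝ))
          (nhdsWithin 0 (Set.Ioi 0)) (nhds 2) := by
        have := (tendsto_const_nhds (x := (2:ℝ))).sub h0
        simpa using this
      have h3 : Tendsto (fun ε : ℝ => (((2 - ε * Real.tanh (1/ε) : ℝ)) : ℂ))
          (nhdsWithin 0 (Set.Ioi 0)) (nhds (2:ℂ)) := by
        exact (Complex.continuous_ofReal.tendsto 2).comp h2
      simpa [one_div] using h3.inv₀ (by norm_num)
    refine Tendsto.congr' ?_ h1
    filter_upwards [self_mem_nhdsWithin] with ε (hε : ε ∈ Set.Ioi 0)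
    have hε0 : (ε : ℂ) ≠ 0 := Complex.ofReal_ne_zero.2 (ne_of_gt hε)
    have hIε : Complex.I * ε ≠ 0 := mul_ne_zero Complex.I_ne_zero hε0
    have htan : Complex.tan (1 / (Complex.I * ε)) = -(Real.tanh (1/ε) : ℂ) * Complex.I := by
      have harg : (1 : ℂ) / (Complex.I * ε) = ((-(1/ε) : ℝ) : ℂ) * Complex.I := by
        rw [div_eq_iff hIε]
        push_cast
        field_simp
        linear_combination Complex.I_mul_I
      rw [harg, Complex.tan_mul_I, ← Complex.ofReal_tanh, Real.tanh_neg]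
      push_cast
      ring
    rw [htan]
    have hden : 2 * (Complex.I * ε) - (Complex.I * ε) ^ 2 * (-(Real.tanh (1/ε) : ℂ) * Complex.I)
        = (Complex.I * ε) * (((2 - ε * Real.tanh (1/ε) : ℝ)) : ℂ) := by
      rw [Complex.ofReal_sub, Complex.ofReal_mul, Complex.ofReal_ofNat]
      linear_combination ((ε:ℂ)^2 * (Real.tanh (1/ε) : ℂ) * Complex.I) * Complex.I_mul_I
    rw [show Complex.I * (ε:ℂ) * (2 * (Complex.I * ε) - (Complex.I * ε) ^ 2 *
        (-(Real.tanh (1/ε) : ℂ) * Complex.I))⁻¹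
      = Complex.I * (ε:ℂ) * ((Complex.I * ε) * (((2 - ε * Real.tanh (1/ε) : ℝ)) : ℂ))⁻¹ from by
        rw [hden], mul_inv, ← mul_assoc, mul_inv_cancel₀ hIε, one_mul]
end
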